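/- Let G be a locally compact group, 𝒜 a unital left-translation-invariant C*-subalgebra of LUC(G), and T ⊆ G an 𝒜-set. Then for every subset T₁ of T and every open set V in G, the set ε(V)·closure(ε(T₁)) is open in the spectrum G^𝒜. -/

import Mathlib

open Pointwise

/-- An abstract model of the compactification `G^𝒜` associated to a unital
left-translation-invariant C*-subalgebra `A` of `CB(G)`: a compact Hausdorff space `X` together
with the (dense-range) evaluation map `ε : G → X`, the natural left action of `G` on `X`
(`(ε(s)x)(f) = x(ₛf)`), and the Gelfand correspondence identifying `A` with `C(X)`. -/
structure GCompactification (G : Type*) [TopologicalSpace G] [Group G]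
    (A : Set (G → ℂ)) (X : Type*) [TopologicalSpace X] [CompactSpace X] [T2Space X] where
  eps : G → X
  dense : DenseRange eps
  act : G → X → X
  act_eps : ∀ s t : G, act s (eps t) = eps (s * t)
  act_mul : ∀ s t : G, ∀ x : X, act (s * t) x = act s (act t x)
  act_cont : ∀ s : G, Continuous (act s)
  gelfand : (G → ℂ) → (X → ℂ)
  gelfand_cont : ∀ f ∈ A, Continuous (gelfand f)
  gelfand_eps : ∀ f ∈ A, ∀ s : G, gelfand f (eps s) = f s
  mem_of_cont : ∀ φ : X → ℂ, Continuous φ → (fun s => φ (eps s)) ∈ A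

/-- The semigroup compactification `G^𝒜` of an admissible subalgebra `A`: additionally `X` carries
an associative multiplication which is right topological, extends that of `G`, and restricts to
the action of `G`. -/
structure GSemigroupCompactification (G : Type*) [TopologicalSpace G] [Group G]
    (A : Set (G → ℂ)) (X : Type*) [TopologicalSpace X] [CompactSpace X] [T2Space X]
    extends GCompactification G A X where
  mul : X → X → X
  mul_assoc : ∀ x y z : X, mul (mul x y) z = mul x (mul y z)
  right_cont : ∀ y : X, Continuous fun x => mul x y
  eps_act : ∀ (s : G) (x : X), mul (eps s) x = act s x

/-- `T` is an `𝒜`-set: for every open neighbourhood `U` of `e` there is an open neighbourhood `V`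
of `e` with `closure V ⊆ U` such that for each `T₁ ⊆ T` some `h ∈ A` is `1` on `VT₁` and `0` off
`UT₁`. -/
def IsASet {G : Type*} [TopologicalSpace G] [Group G] (A : Set (G → ℂ)) (T : Set G) : Prop :=
  ∀ U : Set G, IsOpen U → (1 : G) ∈ U →
    ∃ V : Set G, IsOpen V ∧ (1 : G) ∈ V ∧ closure V ⊆ U ∧
      ∀ T₁ ⊆ T, ∃ h ∈ A, (∀ x ∈ V * T₁, h x = 1) ∧ (∀ x ∉ U * T₁, h x = 0)

/-- Right translation-compact subsets of a topological group. -/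
def RightTranslationCompact {G : Type*} [Group G] [TopologicalSpace G] (T : Set G) : Prop :=
  ∀ L : Set G, ¬ IsCompact (closure L) →
    ∃ F : Set G, F ⊆ L ∧ F.Finite ∧ IsCompact (closure (⋂ b ∈ F, (b * ·) ⁻¹' T))

/-- Theorem 6.1: for `𝒜 ⊆ LUC(G)` (so that the action of `G` on `G^𝒜` is jointly continuous),
`T` is an `𝒜`-set if and only if `ε(V)·closure(ε(T₁))` is open in `G^𝒜` for every `T₁ ⊆ T` and
every open `V ⊆ G`; here we state the forward implication. -/
theorem A_set_open_neighbourhoods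
    {G : Type*} [TopologicalSpace G] [Group G] [IsTopologicalGroup G]
    [LocallyCompactSpace G] [T2Space G]
    (A : Set (G → ℂ)) {X : Type*} [TopologicalSpace X] [CompactSpace X] [T2Space X]
    (C : GCompactification G A X)
    (hone : (fun _ : G => (1 : ℂ)) ∈ A)
    (hlinv : ∀ f ∈ A, ∀ s : G, (fun t => f (s * t)) ∈ A)
    (hjc : Continuous fun p : G × X => C.act p.1 p.2)
    (T : Set G) (hAset : IsASet A T) :
    ∀ T₁ ⊆ T, ∀ V : Set G, IsOpen V →
      IsOpen (Set.image2 C.act V (closure (C.eps '' T₁))) := by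

  intro T₁ hT₁ V hV
  have act_one : ∀ x : X, C.act 1 x = x := by
    have heq : C.act 1 ∘ C.eps = id ∘ C.eps := by
      funext t; simp [C.act_eps]
    have := C.dense.equalizer (C.act_cont 1) continuous_id heq
    intro x; exact congrFun this x
  have act_img_open : ∀ s : G, ∀ O : Set X, IsOpen O → IsOpen (C.act s '' O) := by
    intro s O hO
    have key : C.act s '' O = C.act s⁻¹ ⁻¹' O := by
      ext y
      constructor
      · rintro ⟨z, hz, rfl⟩
        show C.act s⁻¹ (C.act s z) ∈ O
        rw [← C.act_mul]
        simpa [act_one] using hz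
      · intro hy
        refine ⟨C.act s⁻¹ y, hy, ?_⟩
        rw [← C.act_mul]
        simp [act_one]
    rw [key]; exact hO.preimage (C.act_cont _)
  rw [isOpen_iff_forall_mem_open]
  intro p hp
  rw [Set.mem_image2] at hp
  obtain ⟨v, hv, x, hx, rfl⟩ := hp
  have hS : IsOpen ((v * ·) ⁻¹' V) := hV.preimage (continuous_mul_left v)
  have h1S : (1:G) ∈ (v * ·) ⁻¹' V := by simpa using hv
  obtain ⟨K, hK, h1K, hKS⟩ := exists_compact_subset hS h1S
  obtain ⟨V₀, hV₀o, h1V₀, hV₀U', hsep⟩ := hAset (interior K) isOpen_interior h1K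
  obtain ⟨h, hhA, hh1, hh0⟩ := hsep T₁ hT₁
  set F := C.gelfand h with hF
  have hFc : Continuous F := C.gelfand_cont h hhA
  have hx1 : F x = 1 := by
    have hsub : C.eps '' T₁ ⊆ {y | F y = 1} := by
      rintro _ ⟨t, ht, rfl⟩
      show F (C.eps t) = 1
      rw [hF, C.gelfand_eps h hhA]
      exact hh1 t ⟨1, h1V₀, t, ht, one_mul t⟩
    have hclosed : IsClosed {y | F y = 1} := isClosed_eq hFc continuous_const
    exact (closure_minimal hsub hclosed) hx
  have hclK : IsCompact (closure (interior K)) :=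
    hK.of_isClosed_subset isClosed_closure (closure_minimal interior_subset hK.isClosed)
  have hcT : IsCompact (closure (C.eps '' T₁)) := isClosed_closure.isCompact
  have hKcl : IsCompact (Set.image2 C.act (closure (interior K)) (closure (C.eps '' T₁))) := by
    rw [← Set.image_prod]
    exact (hclK.prod hcT).image hjc
  have hopen0 : IsOpen {y | F y ≠ 0} := (isClosed_eq hFc continuous_const).isOpen_compl
  have hne : {y | F y ≠ 0} ⊆ Set.image2 C.act (closure (interior K)) (closure (C.eps '' T₁)) := by
    intro y hy
    have hy' : y ∈ closure (C.eps '' (interior K * T₁)) := by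
      by_contra hc
      have hopen : IsOpen ({z | F z ≠ 0} ∩ (closure (C.eps '' (interior K * T₁)))ᶜ) :=
        hopen0.inter isClosed_closure.isOpen_compl
      obtain ⟨s, hs⟩ := C.dense.exists_mem_open hopen ⟨y, hy, hc⟩
      have hs0 : h s = 0 := by
        apply hh0
        intro hmem
        exact hs.2 (subset_closure ⟨s, hmem, rfl⟩)
      have : F (C.eps s) ≠ 0 := hs.1
      rw [hF, C.gelfand_eps h hhA, hs0] at this
      exact this rfl
    have hsub2 : C.eps '' (interior K * T₁) ⊆
        Set.image2 C.act (closure (interior K)) (closure (C.eps '' T₁)) := by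
      rintro _ ⟨s, ⟨u, hu, t, ht, rfl⟩, rfl⟩
      rw [← C.act_eps]
      exact Set.mem_image2_of_mem (subset_closure hu) (subset_closure ⟨t, ht, rfl⟩)
    exact (closure_minimal hsub2 hKcl.isClosed) hy'
  refine ⟨C.act v '' {y | F y ≠ 0}, ?_, act_img_open v _ hopen0, ⟨x, by simp [hx1], rfl⟩⟩
  rintro _ ⟨y, hy, rfl⟩
  obtain ⟨u, hu, z, hz, rfl⟩ := Set.mem_image2.mp (hne hy)
  rw [← C.act_mul]
  refine Set.mem_image2_of_mem ?_ hz
  exact hKS ((closure_minimal interior_subset hK.isClosed) hu)
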